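/- Let r ≥ 2 be a fixed integer. For every natural number n, the number of partitions of n in which each part k appears at most (r − 1)(k − 1) times equals the number of partitions of n in which no part is a 2r-gonal number, i.e. no part is of the form k·((r − 1)·k − (r − 2)) for some positive integer k. -/

import Mathlib

open PowerSeries Finset
open scoped Classical

namespace SellersAux

noncomputable section

variable {α : Type*}

universe u
variable {ι : Type u}

/-- A convenience constructor for the power series whose coefficients indicate a subset. -/
def indicatorSeries (α : Type*) [Semiring α] (s : Set ℕ) : PowerSeries α :=
  PowerSeries.mk fun n => if n ∈ s then 1 else 0

theorem coeff_indicator (s : Set ℕ) [Semiring α] (n : ℕ) :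
    coeff (R := α) n (indicatorSeries _ s) = if n ∈ s then 1 else 0 :=
  coeff_mk _ _

theorem coeff_indicator_pos (s : Set ℕ) [Semiring α] (n : ℕ) (h : n ∈ s) :
    coeff (R := α) n (indicatorSeries _ s) = 1 := by rw [coeff_indicator, if_pos h]

theorem coeff_indicator_neg (s : Set ℕ) [Semiring α] (n : ℕ) (h : n ∉ s) :
    coeff (R := α) n (indicatorSeries _ s) = 0 := by rw [coeff_indicator, if_neg h]

theorem constantCoeff_indicator (s : Set ℕ) [Semiring α] :
    constantCoeff (R := α) (indicatorSeries _ s) = if 0 ∈ s then 1 else 0 :=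
  rfl

theorem two_series (i : ℕ) [Semiring α] :
    1 + (X : PowerSeries α) ^ i.succ = indicatorSeries α {0, i.succ} := by
  ext n
  simp only [coeff_indicator, coeff_one, coeff_X_pow, Set.mem_insert_iff, Set.mem_singleton_iff,
    map_add]
  cases' n with d
  · simp [(Nat.succ_ne_zero i).symm]
  · simp [Nat.succ_ne_zero d]

theorem num_series' [Field α] (i : ℕ) :
    (1 - (X : PowerSeries α) ^ (i + 1))⁻¹ = indicatorSeries α {k | i + 1 ∣ k} := by
  rw [PowerSeries.inv_eq_iff_mul_eq_one]
  · ext n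
    cases n with
    | zero => simp [mul_sub, zero_pow, constantCoeff_indicator]
    | succ n =>
      simp only [coeff_one, if_false, mul_sub, mul_one, coeff_indicator,
        LinearMap.map_sub, reduceCtorEq]
      simp_rw [coeff_mul, coeff_X_pow, coeff_indicator, @boole_mul _ _ _ _]
      erw [@sum_ite _ _ _ _ _ (fun _ => Classical.propDecidable _), sum_ite]
      simp_rw [@filter_filter _ _ _ _ _, sum_const_zero, add_zero, sum_const, nsmul_eq_mul, mul_one,
        sub_eq_iff_eq_add, zero_add]
      symm
      split_ifs with h
      · suffices #{a ∈ antidiagonal (n + 1) | i + 1 ∣ a.fst ∧ a.snd = i + 1} = 1 by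
          simp only [Set.mem_setOf_eq]; convert congr_arg ((↑) : ℕ → α) this; norm_cast
        rw [card_eq_one]
        cases' h with p hp
        refine ⟨((i + 1) * (p - 1), i + 1), ?_⟩
        ext ⟨a₁, a₂⟩
        simp only [mem_filter, Prod.mk.injEq, HasAntidiagonal.mem_antidiagonal, mem_singleton]
        constructor
        · rintro ⟨a_left, ⟨a, rfl⟩, rfl⟩
          refine ⟨?_, rfl⟩
          rw [Nat.mul_sub_left_distrib, ← hp, ← a_left, mul_one, Nat.add_sub_cancel]
        · rintro ⟨rfl, rfl⟩
          match p with
          | 0 => rw [mul_zero] at hp; cases hp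
          | p + 1 => rw [hp]; simp [mul_add]
      · suffices #{a ∈ antidiagonal (n + 1) | i + 1 ∣ a.fst ∧ a.snd = i + 1} = 0 by
          simp only [Set.mem_setOf_eq]; convert congr_arg ((↑) : ℕ → α) this; norm_cast
        rw [card_eq_zero]
        apply eq_empty_of_forall_notMem
        simp only [Prod.forall, mem_filter, not_and, HasAntidiagonal.mem_antidiagonal]
        rintro _ h₁ h₂ ⟨a, rfl⟩ rfl
        apply h
        simp [← h₂]
  · simp [zero_pow]

def mkOdd : ℕ ↪ ℕ :=
  ⟨fun i => 2 * i + 1, fun x y h => by linarith⟩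

-- The main workhorse of the partition theorem proof.
theorem partialGF_prop (α : Type*) [CommSemiring α] (n : ℕ) (s : Finset ℕ) (hs : ∀ i ∈ s, 0 < i)
    (c : ℕ → Set ℕ) (hc : ∀ i, i ∉ s → 0 ∈ c i) :
    #{p : n.Partition | (∀ j, p.parts.count j ∈ c j) ∧ ∀ j ∈ p.parts, j ∈ s} =
      coeff (R := α) n (∏ i ∈ s, indicatorSeries α ((· * i) '' c i)) := by
  simp_rw [coeff_prod, coeff_indicator, prod_boole, sum_boole]
  apply congr_arg
  simp only [mem_univ, forall_true_left, not_and, not_forall, exists_prop,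
    Set.mem_image, not_exists]
  set φ : (a : Nat.Partition n) →
    a ∈ filter (fun p ↦ (∀ (j : ℕ), Multiset.count j p.parts ∈ c j) ∧ ∀ j ∈ p.parts, j ∈ s) univ →
    ℕ →₀ ℕ := fun p _ => {
      toFun := fun i => Multiset.count i p.parts • i
      support := Finset.filter (fun i => i ≠ 0) p.parts.toFinset
      mem_support_toFun := fun a => by
        simp only [smul_eq_mul, ne_eq, mul_eq_zero, Multiset.count_eq_zero]
        rw [not_or, not_not]
        simp only [Multiset.mem_toFinset, not_not, mem_filter] }
  refine Finset.card_bij φ ?_ ?_ ?_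
  · intro a ha
    simp only [φ, not_forall, not_exists, not_and, exists_prop, mem_filter]
    rw [mem_finsuppAntidiag]
    dsimp only [ne_eq, smul_eq_mul, id_eq, eq_mpr_eq_cast, le_eq_subset, Finsupp.coe_mk]
    simp only [mem_univ, forall_true_left, not_and, not_forall, exists_prop,
      mem_filter, true_and] at ha
    refine ⟨⟨?_, fun i ↦ ?_⟩, fun i _ ↦ ⟨a.parts.count i, ha.1 i, rfl⟩⟩
    · conv_rhs => simp [← a.parts_sum]
      rw [sum_multiset_count_of_subset _ s]
      · simp only [smul_eq_mul]
      · intro i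
        simp only [Multiset.mem_toFinset, not_not, mem_filter]
        apply ha.2
    · simp only [ne_eq, Multiset.mem_toFinset, not_not, mem_filter, and_imp]
      exact fun hi _ ↦ ha.2 i hi
  · intro p₁ hp₁ p₂ hp₂ h
    apply Nat.Partition.ext
    simp only [true_and, mem_univ, mem_filter] at hp₁ hp₂
    ext i
    simp only [φ, ne_eq, Multiset.mem_toFinset, not_not, smul_eq_mul, Finsupp.mk.injEq] at h
    by_cases hi : i = 0
    · rw [hi]
      rw [Multiset.count_eq_zero_of_notMem]
      · rw [Multiset.count_eq_zero_of_notMem]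
        intro a; exact Nat.lt_irrefl 0 (hs 0 (hp₂.2 0 a))
      intro a; exact Nat.lt_irrefl 0 (hs 0 (hp₁.2 0 a))
    · rw [← mul_left_inj' hi]
      rw [funext_iff] at h
      exact h.2 i
  · simp only [φ, mem_filter, mem_finsuppAntidiag, mem_univ, exists_prop, true_and, and_assoc]
    rintro f ⟨hf, hf₃, hf₄⟩
    have hf' : f ∈ finsuppAntidiag s n := mem_finsuppAntidiag.mpr ⟨hf, hf₃⟩
    simp only [mem_finsuppAntidiag] at hf'
    refine ⟨⟨∑ i ∈ s, Multiset.replicate (f i / i) i, ?_, ?_⟩, ?_, ?_, ?_⟩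
    · intro i hi
      simp only [exists_prop, Multiset.mem_sum, mem_map, Function.Embedding.coeFn_mk] at hi
      rcases hi with ⟨t, ht, z⟩
      apply hs
      rwa [Multiset.eq_of_mem_replicate z]
    · simp_rw [Multiset.sum_sum, Multiset.sum_replicate, Nat.nsmul_eq_mul]
      rw [← hf'.1]
      refine sum_congr rfl fun i hi => Nat.div_mul_cancel ?_
      rcases hf₄ i hi with ⟨w, _, hw₂⟩
      rw [← hw₂]
      exact dvd_mul_left _ _
    · intro i
      simp_rw [Multiset.count_sum', Multiset.count_replicate, sum_ite_eq']
      split_ifs with h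
      · rcases hf₄ i h with ⟨w, hw₁, hw₂⟩
        rwa [← hw₂, Nat.mul_div_cancel _ (hs i h)]
      · exact hc _ h
    · intro i hi
      rw [Multiset.mem_sum] at hi
      rcases hi with ⟨j, hj₁, hj₂⟩
      rwa [Multiset.eq_of_mem_replicate hj₂]
    · ext i
      simp_rw [Multiset.count_sum', Multiset.count_replicate, sum_ite_eq']
      simp only [ne_eq, Multiset.mem_toFinset, not_not, smul_eq_mul, ite_mul,
        zero_mul, Finsupp.coe_mk]
      split_ifs with h
      · apply Nat.div_mul_cancel
        rcases hf₄ i h with ⟨w, _, hw₂⟩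
        apply Dvd.intro_left _ hw₂
      · apply symm
        rw [← Finsupp.notMem_support_iff]
        exact notMem_mono hf'.2 h


theorem indicator_geom (α : Type*) [Semiring α] {i : ℕ} (hi : 0 < i) (c : ℕ) :
    indicatorSeries α ((· * i) '' {m | m ≤ c}) =
      ∑ m ∈ range (c + 1), (X : PowerSeries α) ^ (i * m) := by
  ext n
  rw [coeff_indicator, map_sum]
  simp_rw [coeff_X_pow]
  by_cases h : n ∈ (· * i) '' {m | m ≤ c}
  · rw [if_pos h]
    obtain ⟨m₀, hm₀, hm⟩ := h
    simp only at hm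
    subst hm
    rw [Finset.sum_eq_single m₀]
    · simp [mul_comm]
    · intro b _ hb
      rw [if_neg]
      intro hb'
      have hb'' : i * b = i * m₀ := by rw [← hb', mul_comm]
      exact hb (Nat.eq_of_mul_eq_mul_left hi hb'')
    · intro hm
      exact absurd (mem_range.mpr (Nat.lt_succ_of_le hm₀)) hm
  · rw [if_neg h, Finset.sum_eq_zero]
    intro m hm
    rw [if_neg]
    intro he
    exact h ⟨m, Nat.lt_succ_iff.mp (mem_range.mp hm), (mul_comm m i).trans he.symm⟩

theorem factor_eq (i c : ℕ) (hi : 0 < i) :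
    indicatorSeries ℚ ((· * i) '' {m | m ≤ c}) =
      (1 - (X : PowerSeries ℚ) ^ (i * (c + 1))) * (1 - X ^ i)⁻¹ := by
  have hconst : constantCoeff (R := ℚ) (1 - (X : PowerSeries ℚ) ^ i) ≠ 0 := by
    simp [zero_pow hi.ne']
  have key : (1 - (X : PowerSeries ℚ) ^ i) * indicatorSeries ℚ ((· * i) '' {m | m ≤ c})
      = 1 - X ^ (i * (c + 1)) := by
    rw [indicator_geom ℚ hi c]
    have h2 := geom_sum_mul ((X : PowerSeries ℚ) ^ i) (c + 1)
    simp_rw [← pow_mul] at h2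
    linear_combination -h2
  calc indicatorSeries ℚ ((· * i) '' {m | m ≤ c})
      = ((1 - (X : PowerSeries ℚ) ^ i)⁻¹ * (1 - X ^ i)) *
          indicatorSeries ℚ ((· * i) '' {m | m ≤ c}) := by
        rw [PowerSeries.inv_mul_cancel _ hconst, one_mul]
    _ = (1 - X ^ i)⁻¹ * (1 - X ^ (i * (c + 1))) := by rw [mul_assoc, key]
    _ = (1 - X ^ (i * (c + 1))) * (1 - X ^ i)⁻¹ := mul_comm _ _

theorem num_series'' {i : ℕ} (hi : 0 < i) :
    (1 - (X : PowerSeries ℚ) ^ i)⁻¹ = indicatorSeries ℚ ((· * i) '' Set.univ) := by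
  obtain ⟨j, rfl⟩ : ∃ j, i = j + 1 := ⟨i - 1, by omega⟩
  have hset : {k : ℕ | j + 1 ∣ k} = (· * (j + 1)) '' Set.univ := by
    ext k
    simp only [Set.mem_setOf_eq, Set.image_univ, Set.mem_range]
    constructor
    · rintro ⟨m, rfl⟩
      exact ⟨m, mul_comm _ _⟩
    · rintro ⟨m, rfl⟩
      exact ⟨m, mul_comm _ _⟩
  rw [num_series', hset]

end
end SellersAux

open SellersAux Finset PowerSeries in
/-- Sellers' generalization of Andrews' theorem: for fixed `r ≥ 2`, the number of
partitions of `n` in which each part `k` appears at most `(r - 1) * (k - 1)` times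
equals the number of partitions of `n` in which no part is a `2r`-gonal number, i.e.
of the form `k * ((r - 1) * k - (r - 2))` for a positive integer `k`. -/
theorem sellers_even_gons (r : ℕ) (hr : 2 ≤ r) (n : ℕ) :
    Nat.card {p : n.Partition // ∀ k, p.parts.count k ≤ (r - 1) * (k - 1)} =
      Nat.card {p : n.Partition //
        ∀ i ∈ p.parts, ¬ ∃ k : ℕ, 0 < k ∧ i = k * ((r - 1) * k - (r - 2))} := by
  classical
  set g : ℕ → ℕ := fun k => k * ((r - 1) * k - (r - 2)) with hg
  have hgval : ∀ k, 0 < k → g k = k * ((r - 1) * (k - 1) + 1) := by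
    intro k hk
    obtain ⟨k, rfl⟩ : ∃ k', k = k' + 1 := ⟨k - 1, by omega⟩
    have h1 : (r - 1) * (k + 1) = (r - 1) * (k + 1 - 1) + (r - 1) := by
      rw [Nat.add_sub_cancel]; ring
    simp only [hg]
    congr 1
    omega
  have hg_ge : ∀ k, 0 < k → k ≤ g k := by
    intro k hk
    rw [hgval k hk]
    exact Nat.le_mul_of_pos_right k (Nat.succ_pos _)
  have hg_pos : ∀ k, 0 < k → 0 < g k := fun k hk => lt_of_lt_of_le hk (hg_ge k hk)
  have hg_mono : ∀ a b, 0 < a → a < b → g a < g b := by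
    intro a b ha hab
    rw [hgval a ha, hgval b (ha.trans hab)]
    calc a * ((r - 1) * (a - 1) + 1) ≤ a * ((r - 1) * (b - 1) + 1) :=
          Nat.mul_le_mul le_rfl (by have := Nat.mul_le_mul (le_refl (r - 1)) (by omega : a - 1 ≤ b - 1); omega)
      _ < b * ((r - 1) * (b - 1) + 1) := Nat.mul_lt_mul_of_pos_right hab (Nat.succ_pos _)
  set N := n + 1 with hN
  set s : Finset ℕ := Finset.Icc 1 N with hs
  have hs_pos : ∀ i ∈ s, 0 < i := by
    intro i hi
    rw [hs, mem_Icc] at hi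
    omega
  set P : ℕ → Prop := fun j => ∃ k, 0 < k ∧ j = g k with hP
  set T : Finset ℕ := s.filter P with hT
  set s' : Finset ℕ := s.filter fun j => ¬ P j with hs'
  set s₁ : Finset ℕ := s.filter fun i => g i ≤ N with hs₁
  set s₂ : Finset ℕ := s.filter fun i => ¬ g i ≤ N with hs₂
  have hmem : ∀ (p : n.Partition), ∀ j ∈ p.parts, j ∈ s := by
    intro p j hj
    rw [hs, mem_Icc]
    refine ⟨p.parts_pos hj, ?_⟩
    have : j ≤ n := by
      simpa [p.parts_sum] using Multiset.single_le_sum (fun _ _ => Nat.zero_le _) _ hj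
    omega
  -- generating function for the multiplicity-restricted partitions
  have hGF1 := partialGF_prop ℚ n s hs_pos (fun i => {m | m ≤ (r - 1) * (i - 1)})
    (fun i _ => Nat.zero_le _)
  -- generating function for the gap-restricted partitions
  have hGF2 := partialGF_prop ℚ n s' (fun i hi => hs_pos i (mem_of_mem_filter i hi))
    (fun _ => Set.univ) (fun _ _ => Set.mem_univ 0)
  -- each factor of the first gf
  have hfac : ∀ i ∈ s, indicatorSeries ℚ ((· * i) '' {m | m ≤ (r - 1) * (i - 1)}) =
      (1 - (X : PowerSeries ℚ) ^ (g i)) * (1 - X ^ i)⁻¹ := by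
    intro i hi
    rw [factor_eq i ((r - 1) * (i - 1)) (hs_pos i hi), hgval i (hs_pos i hi)]
  have himg : s₁.image g = T := by
    ext j
    simp only [hs₁, hT, mem_image, mem_filter, hs, mem_Icc, hP]
    constructor
    · rintro ⟨i, ⟨⟨hi1, hi2⟩, hgi⟩, rfl⟩
      exact ⟨⟨hg_pos i hi1, hgi⟩, i, hi1, rfl⟩
    · rintro ⟨⟨hj1, hj2⟩, k, hk, rfl⟩
      exact ⟨k, ⟨⟨hk, le_trans (hg_ge k hk) hj2⟩, hj2⟩, rfl⟩
  have hinj : ∀ x ∈ s₁, ∀ y ∈ s₁, g x = g y → x = y := by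
    intro x hx y hy hxy
    have hx1 : 0 < x := hs_pos x (mem_of_mem_filter x hx)
    have hy1 : 0 < y := hs_pos y (mem_of_mem_filter y hy)
    rcases lt_trichotomy x y with h | h | h
    · exact absurd hxy (Nat.ne_of_lt (hg_mono x y hx1 h))
    · exact h
    · exact absurd hxy.symm (Nat.ne_of_lt (hg_mono y x hy1 h))
  have hconst : ∀ j ∈ s, constantCoeff (R := ℚ) (1 - (X : PowerSeries ℚ) ^ j) ≠ 0 := by
    intro j hj
    simp [zero_pow (hs_pos j hj).ne']
  -- the power series identity
  have hbig : (∏ i ∈ s, indicatorSeries ℚ ((· * i) '' {m | m ≤ (r - 1) * (i - 1)})) =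
      (∏ i ∈ s', (1 - (X : PowerSeries ℚ) ^ i)⁻¹) *
        ∏ i ∈ s₂, (1 - (X : PowerSeries ℚ) ^ (g i)) := by
    rw [prod_congr rfl hfac, prod_mul_distrib,
      ← prod_filter_mul_prod_filter_not s (fun i => g i ≤ N)
        (fun i => (1 - (X : PowerSeries ℚ) ^ (g i))),
      ← prod_filter_mul_prod_filter_not s P (fun i => (1 - (X : PowerSeries ℚ) ^ i)⁻¹)]
    rw [show s.filter (fun i => g i ≤ N) = s₁ from rfl,
      show s.filter (fun i => ¬ g i ≤ N) = s₂ from rfl,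
      show s.filter P = T from rfl, show s.filter (fun j => ¬ P j) = s' from rfl]
    have h1 : ∏ i ∈ s₁, (1 - (X : PowerSeries ℚ) ^ (g i)) =
        ∏ j ∈ T, (1 - (X : PowerSeries ℚ) ^ j) := by
      rw [← himg, prod_image hinj]
    rw [h1]
    have hTcancel : (∏ j ∈ T, (1 - (X : PowerSeries ℚ) ^ j)) *
        ∏ j ∈ T, (1 - (X : PowerSeries ℚ) ^ j)⁻¹ = 1 := by
      rw [← prod_mul_distrib]
      refine prod_eq_one fun j hj => ?_
      exact PowerSeries.mul_inv_cancel _ (hconst j (mem_of_mem_filter j hj))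
    calc (∏ j ∈ T, (1 - (X : PowerSeries ℚ) ^ j)) * (∏ i ∈ s₂, (1 - (X : PowerSeries ℚ) ^ g i)) *
          ((∏ j ∈ T, (1 - (X : PowerSeries ℚ) ^ j)⁻¹) * ∏ i ∈ s', (1 - (X : PowerSeries ℚ) ^ i)⁻¹)
        = ((∏ j ∈ T, (1 - (X : PowerSeries ℚ) ^ j)) * ∏ j ∈ T, (1 - (X : PowerSeries ℚ) ^ j)⁻¹) *
          ((∏ i ∈ s', (1 - (X : PowerSeries ℚ) ^ i)⁻¹) *
            ∏ i ∈ s₂, (1 - (X : PowerSeries ℚ) ^ g i)) := by ring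
      _ = (∏ i ∈ s', (1 - (X : PowerSeries ℚ) ^ i)⁻¹) *
            ∏ i ∈ s₂, (1 - (X : PowerSeries ℚ) ^ g i) := by rw [hTcancel, one_mul]
  -- kill the high-order factors
  have hco : (coeff (R := ℚ) n) ((∏ i ∈ s', (1 - (X : PowerSeries ℚ) ^ i)⁻¹) *
      ∏ i ∈ s₂, (1 - (X : PowerSeries ℚ) ^ (g i))) =
      (coeff (R := ℚ) n) (∏ i ∈ s', (1 - (X : PowerSeries ℚ) ^ i)⁻¹) := by
    refine coeff_mul_prod_one_sub_of_lt_order n s₂ _ _ fun i hi => ?_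
    rw [order_X_pow]
    rw [hs₂, mem_filter] at hi
    exact_mod_cast (by omega : n < g i)
  -- rewrite the second gf
  have hGF2' : (∏ i ∈ s', indicatorSeries ℚ ((· * i) '' Set.univ)) =
      ∏ i ∈ s', (1 - (X : PowerSeries ℚ) ^ i)⁻¹ := by
    refine prod_congr rfl fun i hi => ?_
    exact (num_series'' (hs_pos i (mem_of_mem_filter i hi))).symm
  -- identify the two finset cards with the subtype cards
  rw [Nat.card_eq_fintype_card, Nat.card_eq_fintype_card, Fintype.card_subtype,
    Fintype.card_subtype]
  have hA : (univ.filter fun p : n.Partition => ∀ k, p.parts.count k ≤ (r - 1) * (k - 1)) =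
      univ.filter fun p : n.Partition =>
        (∀ j, p.parts.count j ∈ {m | m ≤ (r - 1) * (j - 1)}) ∧ ∀ j ∈ p.parts, j ∈ s := by
    refine filter_congr fun p _ => ?_
    simp only [Set.mem_setOf_eq]
    exact ⟨fun h => ⟨h, hmem p⟩, fun h => h.1⟩
  have hB : (univ.filter fun p : n.Partition =>
        ∀ i ∈ p.parts, ¬ ∃ k : ℕ, 0 < k ∧ i = k * ((r - 1) * k - (r - 2))) =
      univ.filter fun p : n.Partition =>
        (∀ j, p.parts.count j ∈ (Set.univ : Set ℕ)) ∧ ∀ j ∈ p.parts, j ∈ s' := by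
    refine filter_congr fun p _ => ?_
    simp only [Set.mem_univ, forall_const, true_and, hs', mem_filter, hP, hg]
    constructor
    · intro h j hj
      exact ⟨hmem p j hj, h j hj⟩
    · intro h j hj
      exact (h j hj).2
  rw [hA, hB]
  have : ((univ.filter fun p : n.Partition =>
      (∀ j, p.parts.count j ∈ {m | m ≤ (r - 1) * (j - 1)}) ∧ ∀ j ∈ p.parts, j ∈ s).card : ℚ) =
      ((univ.filter fun p : n.Partition =>
        (∀ j, p.parts.count j ∈ (Set.univ : Set ℕ)) ∧ ∀ j ∈ p.parts, j ∈ s').card : ℚ) := by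
    rw [hGF1, hGF2, hGF2', hbig, hco]
  exact_mod_cast this

-- #print axioms sellers_even_gons
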